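/- In the dependency grid D(m, 2m), for any two adjacent columns i and i+1 (1 ≤ i < m), if the number of filled goal vertices in these two columns satisfies 0 < f_i + f_{i+1} < 2m, then the number of cleared start vertices in these two columns satisfies c_i + c_{i+1} ≥ 1. -/
import Mathlib


/-- In the dependency grid `D(m, 2m)` — cells `(x, y)` with
`1 ≤ x ≤ m`, `1 ≤ y ≤ 2m`, where cells with `x + y` even are start vertices and cells
with `x + y` odd are goal vertices, and where the vertex pair `p_{i,j}` consists of the
cells `(i, 2j-1)` and `(i, 2j)` — consider any configuration given by predicates
`filled` (on goal vertices) and `removed` (on start vertices) satisfying the constraint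
that a goal vertex can be filled only if all its grid-neighboring start vertices are
removed.  A start vertex is *cleared* if it is removed but the goal vertex of its
vertex pair is unfilled; `f i` and `c i` count filled goals and cleared starts in
column `i`.  Then for any two adjacent columns `i` and `i+1` (`1 ≤ i < m`), if
`0 < f i + f (i+1) < 2m`, then `c i + c (i+1) ≥ 1`. -/
theorem dependency_grid_adjacent_columns (m : ℕ)
    (filled removed : ℕ × ℕ → Prop) [DecidablePred filled] [DecidablePred removed]
    -- a goal can be filled only if all grid-adjacent start vertices are removed:
    (hconstraint : ∀ x y, 1 ≤ x → x ≤ m → 1 ≤ y → y ≤ 2 * m → (x + y) % 2 = 1 →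
      filled (x, y) →
      ∀ x' y', 1 ≤ x' → x' ≤ m → 1 ≤ y' → y' ≤ 2 * m →
        ((x' = x ∧ (y' = y + 1 ∨ y' + 1 = y)) ∨ (y' = y ∧ (x' = x + 1 ∨ x' + 1 = x))) →
        removed (x', y'))
    -- `f i`: number of filled goal vertices in column `i`:
    (f : ℕ → ℕ)
    (hf : ∀ i, f i =
      ((Finset.Icc 1 (2 * m)).filter (fun y => (i + y) % 2 = 1 ∧ filled (i, y))).card)
    -- `c i`: number of cleared start vertices in column `i` (removed, but the goal
    -- vertex of its vertex pair is unfilled):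
    (c : ℕ → ℕ)
    (hc : ∀ i, c i =
      ((Finset.Icc 1 (2 * m)).filter (fun y => (i + y) % 2 = 0 ∧ removed (i, y) ∧
        ¬ filled (i, if y % 2 = 1 then y + 1 else y - 1))).card) :
    ∀ i, 1 ≤ i → i < m → 0 < f i + f (i + 1) → f i + f (i + 1) < 2 * m →
      1 ≤ c i + c (i + 1) := by
  intro i hi1 him hpos hlt
  by_contra hcon
  push_neg at hcon
  have hci : c i = 0 := by omega
  have hci1 : c (i + 1) = 0 := by omega
  -- no cleared starts in columns i, i+1: removed starts have their pair goal filled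
  have hnc : ∀ x y, (x = i ∨ x = i + 1) → 1 ≤ y → y ≤ 2 * m → (x + y) % 2 = 0 →
      removed (x, y) → filled (x, if y % 2 = 1 then y + 1 else y - 1) := by
    intro x y hx hy1 hy2 hpar hrem
    by_contra hnf
    have hx0 : c x = 0 := by rcases hx with h | h <;> simp [h, hci, hci1]
    rw [hc x, Finset.card_eq_zero] at hx0
    have hy : y ∈ (Finset.Icc 1 (2 * m)).filter (fun y => (x + y) % 2 = 0 ∧
        removed (x, y) ∧ ¬ filled (x, if y % 2 = 1 then y + 1 else y - 1)) :=
      Finset.mem_filter.mpr ⟨Finset.mem_Icc.mpr ⟨hy1, hy2⟩, hpar, hrem, hnf⟩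
    rw [hx0] at hy
    exact absurd hy (Finset.notMem_empty y)
  -- propagation step: a filled goal fills the pair-goal of every adjacent start
  have hstep : ∀ x y, (x = i ∨ x = i + 1) → 1 ≤ y → y ≤ 2 * m → (x + y) % 2 = 1 →
      filled (x, y) → ∀ x' y', (x' = i ∨ x' = i + 1) → 1 ≤ y' → y' ≤ 2 * m →
      ((x' = x ∧ (y' = y + 1 ∨ y' + 1 = y)) ∨ (y' = y ∧ (x' = x + 1 ∨ x' + 1 = x))) →
      filled (x', if y' % 2 = 1 then y' + 1 else y' - 1) := by
    intro x y hx hy1 hy2 hpar hfill x' y' hx' hy1' hy2' hadj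
    have hrem := hconstraint x y (by omega) (by omega) hy1 hy2 hpar hfill x' y'
      (by omega) (by omega) hy1' hy2' hadj
    exact hnc x' y' hx' hy1' hy2' (by omega) hrem
  -- vertical propagation upward
  have hup : ∀ x y, (x = i ∨ x = i + 1) → 1 ≤ y → y + 2 ≤ 2 * m → (x + y) % 2 = 1 →
      y % 2 = 0 → filled (x, y) → filled (x, y + 2) := by
    intro x y hx hy1 hy2 hpar hyev hfill
    have h := hstep x y hx hy1 (by omega) hpar hfill x (y + 1) hx (by omega) (by omega)
      (by omega)
    rwa [if_pos (by omega : (y + 1) % 2 = 1)] at h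
  -- vertical propagation downward
  have hdown : ∀ x y, (x = i ∨ x = i + 1) → 3 ≤ y → y ≤ 2 * m → (x + y) % 2 = 1 →
      y % 2 = 1 → filled (x, y) → filled (x, y - 2) := by
    intro x y hx hy1 hy2 hpar hyodd hfill
    have h := hstep x y hx (by omega) hy2 hpar hfill x (y - 1) hx (by omega) (by omega)
      (by omega)
    rw [if_neg (by omega : ¬ (y - 1) % 2 = 1)] at h
    have he : y - 1 - 1 = y - 2 := by omega
    rwa [he] at h
  -- horizontal propagation
  have hhoriz : ∀ x y, (x = i ∨ x = i + 1) → 1 ≤ y → y ≤ 2 * m → (x + y) % 2 = 1 →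
      filled (x, y) → filled (2 * i + 1 - x, if y % 2 = 1 then y + 1 else y - 1) := by
    intro x y hx hy1 hy2 hpar hfill
    exact hstep x y hx hy1 hy2 hpar hfill (2 * i + 1 - x) y (by omega) hy1 hy2 (by omega)
  -- a single filled goal fills the whole pair row (both columns)
  have hQ1 : ∀ x y, (x = i ∨ x = i + 1) → 1 ≤ y → y ≤ 2 * m → (x + y) % 2 = 1 →
      filled (x, y) →
      filled (i, 2 * ((y + 1) / 2) - 1 + i % 2) ∧
      filled (i + 1, 2 * ((y + 1) / 2) - i % 2) := by
    intro x y hx hy1 hy2 hpar hfill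
    have hh := hhoriz x y hx hy1 hy2 hpar hfill
    rcases hx with hxe | hxe
    · have hxe2 := hxe.symm; subst hxe2
      constructor
      · have he : 2 * ((y + 1) / 2) - 1 + i % 2 = y := by omega
        rwa [he]
      · have hxx : 2 * i + 1 - i = i + 1 := by omega
        rw [hxx] at hh
        have he : (if y % 2 = 1 then y + 1 else y - 1) = 2 * ((y + 1) / 2) - i % 2 := by
          split_ifs <;> omega
        rwa [he] at hh
    · have hxe2 := hxe.symm; subst hxe2
      constructor
      · have hxx : 2 * i + 1 - (i + 1) = i := by omega
        rw [hxx] at hh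
        have he : (if y % 2 = 1 then y + 1 else y - 1) = 2 * ((y + 1) / 2) - 1 + i % 2 := by
          split_ifs <;> omega
        rwa [he] at hh
      · have he : 2 * ((y + 1) / 2) - i % 2 = y := by omega
        rwa [he]
  -- pair row j fills pair row j+1
  have hQsucc : ∀ j, 1 ≤ j → j + 1 ≤ m →
      (filled (i, 2 * j - 1 + i % 2) ∧ filled (i + 1, 2 * j - i % 2)) →
      filled (i, 2 * (j + 1) - 1 + i % 2) ∧ filled (i + 1, 2 * (j + 1) - i % 2) := by
    intro j hj1 hjm ⟨hA, hB⟩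
    rcases (by omega : i % 2 = 0 ∨ i % 2 = 1) with h0 | h0
    · have hB' : filled (i + 1, 2 * j) := by
        have he : 2 * j - i % 2 = 2 * j := by omega
        rwa [he] at hB
      have h := hup (i + 1) (2 * j) (by omega) (by omega) (by omega) (by omega)
        (by omega) hB'
      have h2 := hQ1 (i + 1) (2 * j + 2) (by omega) (by omega) (by omega) (by omega) h
      have he : (2 * j + 2 + 1) / 2 = j + 1 := by omega
      rwa [he] at h2
    · have hA' : filled (i, 2 * j) := by
        have he : 2 * j - 1 + i % 2 = 2 * j := by omega
        rwa [he] at hA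
      have h := hup i (2 * j) (by omega) (by omega) (by omega) (by omega) (by omega) hA'
      have h2 := hQ1 i (2 * j + 2) (by omega) (by omega) (by omega) (by omega) h
      have he : (2 * j + 2 + 1) / 2 = j + 1 := by omega
      rwa [he] at h2
  -- pair row j fills pair row j-1
  have hQpred : ∀ j, 2 ≤ j → j ≤ m →
      (filled (i, 2 * j - 1 + i % 2) ∧ filled (i + 1, 2 * j - i % 2)) →
      filled (i, 2 * (j - 1) - 1 + i % 2) ∧ filled (i + 1, 2 * (j - 1) - i % 2) := by
    intro j hj1 hjm ⟨hA, hB⟩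
    rcases (by omega : i % 2 = 0 ∨ i % 2 = 1) with h0 | h0
    · have hA' : filled (i, 2 * j - 1) := by
        have he : 2 * j - 1 + i % 2 = 2 * j - 1 := by omega
        rwa [he] at hA
      have h := hdown i (2 * j - 1) (by omega) (by omega) (by omega) (by omega)
        (by omega) hA'
      have he2 : 2 * j - 1 - 2 = 2 * j - 3 := by omega
      rw [he2] at h
      have h2 := hQ1 i (2 * j - 3) (by omega) (by omega) (by omega) (by omega) h
      have he : (2 * j - 3 + 1) / 2 = j - 1 := by omega
      rwa [he] at h2
    · have hB' : filled (i + 1, 2 * j - 1) := by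
        have he : 2 * j - i % 2 = 2 * j - 1 := by omega
        rwa [he] at hB
      have h := hdown (i + 1) (2 * j - 1) (by omega) (by omega) (by omega) (by omega)
        (by omega) hB'
      have he2 : 2 * j - 1 - 2 = 2 * j - 3 := by omega
      rw [he2] at h
      have h2 := hQ1 (i + 1) (2 * j - 3) (by omega) (by omega) (by omega) (by omega) h
      have he : (2 * j - 3 + 1) / 2 = j - 1 := by omega
      rwa [he] at h2
  -- extract one filled goal from 0 < f i + f (i+1)
  obtain ⟨x0, y0, hx0, hy01, hy02, hpar0, hfill0⟩ :
      ∃ x y, (x = i ∨ x = i + 1) ∧ 1 ≤ y ∧ y ≤ 2 * m ∧ (x + y) % 2 = 1 ∧ filled (x, y) := by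
    rcases (by omega : 0 < f i ∨ 0 < f (i + 1)) with h | h
    · rw [hf i, Finset.card_pos] at h
      obtain ⟨y, hy⟩ := h
      rw [Finset.mem_filter, Finset.mem_Icc] at hy
      exact ⟨i, y, Or.inl rfl, hy.1.1, hy.1.2, hy.2.1, hy.2.2⟩
    · rw [hf (i + 1), Finset.card_pos] at h
      obtain ⟨y, hy⟩ := h
      rw [Finset.mem_filter, Finset.mem_Icc] at hy
      exact ⟨i + 1, y, Or.inr rfl, hy.1.1, hy.1.2, hy.2.1, hy.2.2⟩
  set j0 := (y0 + 1) / 2 with hj0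
  have hj01 : 1 ≤ j0 := by omega
  have hj0m : j0 ≤ m := by omega
  have hQ0 : filled (i, 2 * j0 - 1 + i % 2) ∧ filled (i + 1, 2 * j0 - i % 2) :=
    hQ1 x0 y0 hx0 hy01 hy02 hpar0 hfill0
  -- all pair rows filled
  have hall : ∀ j, 1 ≤ j → j ≤ m →
      filled (i, 2 * j - 1 + i % 2) ∧ filled (i + 1, 2 * j - i % 2) := by
    have hupall : ∀ k, j0 + k ≤ m →
        filled (i, 2 * (j0 + k) - 1 + i % 2) ∧ filled (i + 1, 2 * (j0 + k) - i % 2) := by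
      intro k
      induction k with
      | zero => intro _; exact hQ0
      | succ n ih =>
        intro hkm
        have h := hQsucc (j0 + n) (by omega) (by omega) (ih (by omega))
        have he : j0 + n + 1 = j0 + (n + 1) := by omega
        rwa [he] at h
    have hdownall : ∀ k, k ≤ j0 - 1 →
        filled (i, 2 * (j0 - k) - 1 + i % 2) ∧ filled (i + 1, 2 * (j0 - k) - i % 2) := by
      intro k
      induction k with
      | zero => intro _; simpa using hQ0
      | succ n ih =>
        intro hkm
        have h := hQpred (j0 - n) (by omega) (by omega) (ih (by omega))
        have he : j0 - n - 1 = j0 - (n + 1) := by omega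
        rwa [he] at h
    intro j hj1 hjm
    rcases le_or_gt j0 j with h | h
    · have h1 := hupall (j - j0) (by omega)
      have he : j0 + (j - j0) = j := by omega
      rwa [he] at h1
    · have h1 := hdownall (j0 - j) (by omega)
      have he : j0 - (j0 - j) = j := by omega
      rwa [he] at h1
  -- every goal in both columns is filled
  have hallgoals : ∀ x y, (x = i ∨ x = i + 1) → 1 ≤ y → y ≤ 2 * m → (x + y) % 2 = 1 →
      filled (x, y) := by
    intro x y hx hy1 hy2 hpar
    have h := hall ((y + 1) / 2) (by omega) (by omega)
    rcases hx with hxe | hxe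
    · have hxe2 := hxe.symm; subst hxe2
      have he : 2 * ((y + 1) / 2) - 1 + i % 2 = y := by omega
      rw [he] at h
      exact h.1
    · have hxe2 := hxe.symm; subst hxe2
      have he : 2 * ((y + 1) / 2) - i % 2 = y := by omega
      rw [he] at h
      exact h.2
  -- counting: f i + f (i+1) ≥ 2m, contradiction
  have hsub : Finset.Icc 1 (2 * m) ⊆
      ((Finset.Icc 1 (2 * m)).filter (fun y => (i + y) % 2 = 1 ∧ filled (i, y))) ∪
      ((Finset.Icc 1 (2 * m)).filter (fun y => (i + 1 + y) % 2 = 1 ∧ filled (i + 1, y))) := by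
    intro y hy
    rw [Finset.mem_Icc] at hy
    rw [Finset.mem_union, Finset.mem_filter, Finset.mem_filter, Finset.mem_Icc]
    rcases (by omega : (i + y) % 2 = 1 ∨ (i + 1 + y) % 2 = 1) with h | h
    · exact Or.inl ⟨hy, h, hallgoals i y (Or.inl rfl) hy.1 hy.2 h⟩
    · exact Or.inr ⟨hy, h, hallgoals (i + 1) y (Or.inr rfl) hy.1 hy.2 h⟩
  have hcard := (Finset.card_le_card hsub).trans (Finset.card_union_le _ _)
  rw [Nat.card_Icc] at hcard
  rw [hf i, hf (i + 1)] at hlt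
  omega
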